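/- Let T be a triangulated category, A ⊆ T a full dense triangulated subcategory (every object of T is a direct summand of an object of A). If the induced map K(A) → K(T) on Grothendieck groups is surjective, then A = T. -/

import Mathlib

set_option linter.unusedSectionVars false

open CategoryTheory CategoryTheory.Pretriangulated

/-- The defining relations of the Grothendieck group of a pretriangulated category:
for each distinguished triangle `X → Y → Z → X[1]`, the relation `[Y] = [X] + [Z]`. -/
noncomputable def triangleRelations (C : Type*) [Category C] [Limits.HasZeroObject C]
    [HasShift C ℤ] [Preadditive C] [∀ n : ℤ, (shiftFunctor C n).Additive]
    [Pretriangulated C] : AddSubgroup (FreeAbelianGroup C) :=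
  AddSubgroup.closure
    {x | ∃ T : Triangle C, (T ∈ distTriang C) ∧
      x = FreeAbelianGroup.of T.obj₂ - FreeAbelianGroup.of T.obj₁ - FreeAbelianGroup.of T.obj₃}

open CategoryTheory.Limits ZeroObject

namespace ThomasonAux

variable {C : Type*} [Category C] [Limits.HasZeroObject C]
    [HasShift C ℤ] [Preadditive C] [∀ n : ℤ, (shiftFunctor C n).Additive]
    [Pretriangulated C]

noncomputable def assocIso (X Y Z : C) : (X ⊞ Y) ⊞ Z ≅ X ⊞ (Y ⊞ Z) where
  hom := biprod.lift (biprod.fst ≫ biprod.fst)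
    (biprod.lift (biprod.fst ≫ biprod.snd) biprod.snd)
  inv := biprod.lift (biprod.lift biprod.fst (biprod.snd ≫ biprod.fst))
    (biprod.snd ≫ biprod.snd)

noncomputable def zeroIso (X : C) : X ⊞ (0 : C) ≅ X :=
  biprod.braiding X 0 ≪≫ (isoZeroBiprod (isZero_zero C)).symm

noncomputable def swapIso (X Y Z : C) : (X ⊞ Y) ⊞ Z ≅ (X ⊞ Z) ⊞ Y :=
  assocIso X Y Z ≪≫ biprod.mapIso (Iso.refl X) (biprod.braiding Y Z) ≪≫ (assocIso X Z Y).symm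

noncomputable def exchIso (X Y Z W : C) : (X ⊞ Y) ⊞ (Z ⊞ W) ≅ (X ⊞ Z) ⊞ (Y ⊞ W) :=
  (assocIso (X ⊞ Y) Z W).symm ≪≫ biprod.mapIso (swapIso X Y Z) (Iso.refl W) ≪≫
    assocIso (X ⊞ Z) Y W

noncomputable def piBoolIso (F : Bool → C) : (∏ᶜ F) ≅ F true ⊞ F false where
  hom := biprod.lift (Pi.π F true) (Pi.π F false)
  inv := Pi.lift (fun b => match b with | true => biprod.fst | false => biprod.snd)
  hom_inv_id := by
    apply Pi.hom_ext
    rintro (_ | _) <;> simp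
  inv_hom_id := by
    apply biprod.hom_ext <;> simp

lemma exists_sum_triangle (T₁ T₂ : Triangle C) (h₁ : T₁ ∈ distTriang C)
    (h₂ : T₂ ∈ distTriang C) :
    ∃ U ∈ distTriang C, Nonempty (U.obj₁ ≅ T₁.obj₁ ⊞ T₂.obj₁) ∧
      Nonempty (U.obj₂ ≅ T₁.obj₂ ⊞ T₂.obj₂) ∧ Nonempty (U.obj₃ ≅ T₁.obj₃ ⊞ T₂.obj₃) := by
  refine ⟨productTriangle (fun b : Bool => Bool.rec T₂ T₁ b),
    productTriangle_distinguished _ (by rintro (_ | _) <;> assumption), ⟨?_⟩, ⟨?_⟩, ⟨?_⟩⟩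
  · exact piBoolIso (fun b : Bool => (Bool.rec T₂ T₁ b : Triangle C).obj₁)
  · exact piBoolIso (fun b : Bool => (Bool.rec T₂ T₁ b : Triangle C).obj₂)
  · exact piBoolIso (fun b : Bool => (Bool.rec T₂ T₁ b : Triangle C).obj₃)


variable (S : ObjectProperty C) [S.IsTriangulated] [S.IsClosedUnderIsomorphisms]

lemma P_of_iso {x y : C} (e : x ≅ y) (hx : S x) : S y :=
  S.prop_of_iso e hx

lemma P_biprod {a b : C} (ha : S a) (hb : S b) : S (a ⊞ b) :=
  S.ext_of_isTriangulatedClosed₂ _ (binaryBiproductTriangle_distinguished a b) ha hb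

/-- The relation underlying the "objects modulo `A`" group. -/
def rel (x y : C) : Prop := ∃ a b : C, S a ∧ S b ∧ Nonempty (x ⊞ a ≅ y ⊞ b)

lemma rel_refl (x : C) : rel S x x := ⟨0, 0, S.prop_zero, S.prop_zero, ⟨Iso.refl _⟩⟩

lemma rel_symm {x y : C} (h : rel S x y) : rel S y x := by
  obtain ⟨a, b, ha, hb, ⟨e⟩⟩ := h
  exact ⟨b, a, hb, ha, ⟨e.symm⟩⟩

lemma rel_trans {x y z : C} (h : rel S x y) (h' : rel S y z) : rel S x z := by
  obtain ⟨a, b, ha, hb, ⟨e⟩⟩ := h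
  obtain ⟨c, d, hc, hd, ⟨f⟩⟩ := h'
  refine ⟨a ⊞ c, d ⊞ b, P_biprod S ha hc, P_biprod S hd hb, ⟨?_⟩⟩
  calc x ⊞ (a ⊞ c) ≅ (x ⊞ a) ⊞ c := (assocIso x a c).symm
    _ ≅ (y ⊞ b) ⊞ c := biprod.mapIso e (Iso.refl c)
    _ ≅ (y ⊞ c) ⊞ b := swapIso y b c
    _ ≅ (z ⊞ d) ⊞ b := biprod.mapIso f (Iso.refl b)
    _ ≅ z ⊞ (d ⊞ b) := assocIso z d b

/-- The setoid of objects of `C` modulo the subcategory. -/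
def relSetoid : Setoid C :=
  ⟨rel S, ⟨rel_refl S, rel_symm S, rel_trans S⟩⟩

/-- Thomason's group of objects of `C` modulo the dense subcategory. -/
def Cl := Quotient (relSetoid S)

/-- Class of an object. -/
def mk (x : C) : Cl S := Quotient.mk (relSetoid S) x

lemma mk_eq_of_iso {x y : C} (e : x ≅ y) : mk S x = mk S y :=
  Quotient.sound ⟨0, 0, S.prop_zero, S.prop_zero, ⟨biprod.mapIso e (Iso.refl 0)⟩⟩

lemma mk_eq_zero_obj {a : C} (ha : S a) : mk S a = mk S 0 :=
  Quotient.sound ⟨0, a, S.prop_zero, ha, ⟨zeroIso a ≪≫ (isoZeroBiprod (isZero_zero C))⟩⟩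

lemma rel_biprod {x x' y y' : C} (h : rel S x x') (h' : rel S y y') :
    rel S (x ⊞ y) (x' ⊞ y') := by
  obtain ⟨a, b, ha, hb, ⟨e⟩⟩ := h
  obtain ⟨c, d, hc, hd, ⟨f⟩⟩ := h'
  refine ⟨a ⊞ c, b ⊞ d, P_biprod S ha hc, P_biprod S hb hd, ⟨?_⟩⟩
  calc (x ⊞ y) ⊞ (a ⊞ c) ≅ (x ⊞ a) ⊞ (y ⊞ c) := exchIso x y a c
    _ ≅ (x' ⊞ b) ⊞ (y' ⊞ d) := biprod.mapIso e f
    _ ≅ (x' ⊞ y') ⊞ (b ⊞ d) := exchIso x' b y' d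

/-- Addition on `Cl`. -/
noncomputable def add : Cl S → Cl S → Cl S :=
  Quotient.map₂ (· ⊞ ·) (fun _ _ h _ _ h' => rel_biprod S h h')

lemma add_mk (x y : C) : add S (mk S x) (mk S y) = mk S (x ⊞ y) := rfl

lemma add_comm' (g h : Cl S) : add S g h = add S h g := by
  obtain ⟨x⟩ := g; obtain ⟨y⟩ := h
  exact mk_eq_of_iso S (biprod.braiding x y)

lemma add_assoc' (g h k : Cl S) : add S (add S g h) k = add S g (add S h k) := by
  obtain ⟨x⟩ := g; obtain ⟨y⟩ := h; obtain ⟨z⟩ := k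
  exact mk_eq_of_iso S (assocIso x y z)

lemma add_zero' (g : Cl S) : add S g (mk S 0) = g := by
  obtain ⟨x⟩ := g
  exact mk_eq_of_iso S (zeroIso x)


variable (hdense : ∀ X : C, ∃ a : C, S a ∧ ∃ (i : X ⟶ a) (p : a ⟶ X), i ≫ p = 𝟙 X)

include hdense

/-- Density gives for every `X` a complement `z` with `X ⊞ z` in the subcategory. -/
lemma exists_split (X : C) : ∃ z a : C, S a ∧ Nonempty (a ≅ X ⊞ z) := by
  obtain ⟨a, ha, i, p, hip⟩ := hdense X
  obtain ⟨z, q, w, mem⟩ := distinguished_cocone_triangle i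
  obtain ⟨c, -, hc₂⟩ := complete_distinguished_triangle_morphism (Triangle.mk i q w)
    (contractibleTriangle X) mem (contractible_distinguished X) (𝟙 X) p (hip.trans (Category.comp_id (𝟙 X)).symm)
  have hw : w = 0 := by
    have h := hc₂
    erw [CategoryTheory.Functor.map_id, Category.comp_id, comp_zero] at h
    exact h
  obtain ⟨e, -, -⟩ := exists_iso_binaryBiproduct_of_distTriang (Triangle.mk i q w) mem hw
  exact ⟨z, a, ha, ⟨e⟩⟩

/-- The key relation: the middle term of a distinguished triangle is equivalent to the
biproduct of the outer terms, modulo the dense subcategory. -/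
lemma rel_middle {T : Triangle C} (hT : T ∈ distTriang C) :
    rel S T.obj₂ (T.obj₁ ⊞ T.obj₃) := by
  obtain ⟨x', a₀, ha₀, ⟨e₁⟩⟩ := exists_split S hdense T.obj₁
  obtain ⟨z', b₀, hb₀, ⟨e₂⟩⟩ := exists_split S hdense T.obj₃
  -- first, sum `T` with the contractible triangle on `x'`
  obtain ⟨U, hU, ⟨u₁⟩, ⟨u₂⟩, ⟨u₃⟩⟩ := exists_sum_triangle T (contractibleTriangle x') hT
    (contractible_distinguished x')
  -- then sum with the triangle `0 ⟶ z' ⟶ z'`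
  obtain ⟨V, hV, ⟨v₁⟩, ⟨v₂⟩, ⟨v₃⟩⟩ := exists_sum_triangle U (Triangle.mk (0 : (0 : C) ⟶ z') (𝟙 z') 0)
    hU (contractible_distinguished₁ z')
  have hV₁ : S V.obj₁ := by
    refine P_of_iso S (e₁ ≪≫ (zeroIso (T.obj₁ ⊞ x')).symm ≪≫
      (biprod.mapIso u₁ (Iso.refl (0 : C))).symm ≪≫ v₁.symm) ha₀
  have hV₃ : S V.obj₃ := by
    refine P_of_iso S (e₂ ≪≫ ?_ ≪≫ v₃.symm) hb₀
    exact biprod.mapIso ((zeroIso T.obj₃).symm ≪≫ u₃.symm) (Iso.refl z')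
  have hV₂ : S V.obj₂ := S.ext_of_isTriangulatedClosed₂ V hV hV₁ hV₃
  have hmid : S (T.obj₂ ⊞ (x' ⊞ z')) :=
    P_of_iso S (v₂ ≪≫ biprod.mapIso u₂ (Iso.refl z') ≪≫ assocIso T.obj₂ x' z') hV₂
  refine ⟨a₀ ⊞ b₀, T.obj₂ ⊞ (x' ⊞ z'), P_biprod S ha₀ hb₀, hmid, ⟨?_⟩⟩
  calc T.obj₂ ⊞ (a₀ ⊞ b₀)
      ≅ T.obj₂ ⊞ ((T.obj₁ ⊞ x') ⊞ (T.obj₃ ⊞ z')) :=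
        biprod.mapIso (Iso.refl _) (biprod.mapIso e₁ e₂)
    _ ≅ T.obj₂ ⊞ ((T.obj₁ ⊞ T.obj₃) ⊞ (x' ⊞ z')) :=
        biprod.mapIso (Iso.refl _) (exchIso T.obj₁ x' T.obj₃ z')
    _ ≅ (T.obj₂ ⊞ (T.obj₁ ⊞ T.obj₃)) ⊞ (x' ⊞ z') :=
        (assocIso T.obj₂ (T.obj₁ ⊞ T.obj₃) (x' ⊞ z')).symm
    _ ≅ ((T.obj₁ ⊞ T.obj₃) ⊞ T.obj₂) ⊞ (x' ⊞ z') :=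
        biprod.mapIso (biprod.braiding T.obj₂ (T.obj₁ ⊞ T.obj₃)) (Iso.refl _)
    _ ≅ (T.obj₁ ⊞ T.obj₃) ⊞ (T.obj₂ ⊞ (x' ⊞ z')) :=
        assocIso (T.obj₁ ⊞ T.obj₃) T.obj₂ (x' ⊞ z')

lemma exists_neg (g : Cl S) : ∃ h : Cl S, add S h g = mk S 0 := by
  obtain ⟨x⟩ := g
  obtain ⟨z, a, ha, ⟨e⟩⟩ := exists_split S hdense x
  refine ⟨mk S z, ?_⟩
  show add S (mk S z) (mk S x) = mk S 0
  rw [add_mk]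
  exact (mk_eq_of_iso S (biprod.braiding z x ≪≫ e.symm)).trans (mk_eq_zero_obj S ha)

/-- The group structure on `Cl S` (when the subcategory is dense). -/
noncomputable def clAddCommGroup : AddCommGroup (Cl S) := by
  letI : Zero (Cl S) := ⟨mk S 0⟩
  letI : Add (Cl S) := ⟨add S⟩
  letI : Neg (Cl S) := ⟨fun g => (exists_neg S hdense g).choose⟩
  exact
    { add := (· + ·)
      zero := 0
      neg := (- ·)
      add_assoc := add_assoc' S
      zero_add := fun g => (add_comm' S (mk S 0) g).trans (add_zero' S g)
      add_zero := add_zero' S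
      add_comm := add_comm' S
      neg_add_cancel := fun g => (exists_neg S hdense g).choose_spec
      nsmul := nsmulRec
      zsmul := zsmulRec }

end ThomasonAux


open ThomasonAux in
/-- Thomason's theorem on dense triangulated subcategories: let `T` be a triangulated
category and `A ⊆ T` a full dense triangulated subcategory (every object of `T` is a
direct summand of an object of `A`).  If the induced map `K(A) → K(T)` on Grothendieck
groups is surjective (every class in `K(T)` comes from a combination of objects of `A`),
then `A = T` (every object of `T` lies in `A`). -/
theorem stmt_16 (C : Type*) [Category C] [Limits.HasZeroObject C]
    [HasShift C ℤ] [Preadditive C] [∀ n : ℤ, (shiftFunctor C n).Additive]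
    [Pretriangulated C] (S : ObjectProperty C) [S.IsTriangulated] [S.IsClosedUnderIsomorphisms]
    (hdense : ∀ X : C, ∃ a : C, S a ∧ ∃ (i : X ⟶ a) (p : a ⟶ X), i ≫ p = 𝟙 X)
    (hK : ∀ k : FreeAbelianGroup C ⧸ triangleRelations C,
      ∃ x : FreeAbelianGroup {X : C // S X},
        QuotientAddGroup.mk' (triangleRelations C) (FreeAbelianGroup.map Subtype.val x) = k) :
    ∀ X : C, S X := by
  intro X
  letI : AddCommGroup (Cl S) := clAddCommGroup S hdense
  set φ : FreeAbelianGroup C →+ Cl S := FreeAbelianGroup.lift (mk S) with hφ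
  have hφof : ∀ x : C, φ (FreeAbelianGroup.of x) = mk S x := fun x => FreeAbelianGroup.lift_apply_of _ _
  have hzero : (0 : Cl S) = mk S (0 : C) := rfl
  have haddd : ∀ x y : C, mk S x + mk S y = mk S (x ⊞ y) := fun _ _ => rfl
  -- `φ` kills the triangle relations
  have hker : ∀ u ∈ triangleRelations C, φ u = 0 := by
    have hle : triangleRelations C ≤ φ.ker := by
      refine (AddSubgroup.closure_le φ.ker).2 ?_
      rintro u ⟨T, hT, rfl⟩
      have h2 : mk S T.obj₂ = mk S T.obj₁ + mk S T.obj₃ := by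
        rw [haddd]
        exact Quotient.sound (rel_middle S hdense hT)
      rw [SetLike.mem_coe, AddMonoidHom.mem_ker, map_sub, map_sub, hφof, hφof, hφof, h2]
      abel
    exact fun u hu => hle hu
  -- `φ` kills everything coming from the subcategory
  have hA : ∀ w : FreeAbelianGroup {Y : C // S Y},
      φ (FreeAbelianGroup.map Subtype.val w) = 0 := by
    intro w
    refine FreeAbelianGroup.induction_on w (by simp) (fun y => ?_) (fun y _ => ?_)
      (fun y z hy hz => ?_)
    · rw [FreeAbelianGroup.map_of_apply, hφof, hzero]
      exact mk_eq_zero_obj S y.2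
    · rw [map_neg, map_neg, FreeAbelianGroup.map_of_apply, hφof,
        mk_eq_zero_obj S y.2, ← hzero, neg_zero]
    · rw [map_add, map_add, hy, hz, add_zero]
  -- conclude that the class of `X` vanishes
  obtain ⟨w, hw⟩ := hK (QuotientAddGroup.mk' _ (FreeAbelianGroup.of X))
  rw [QuotientAddGroup.mk'_eq_mk'] at hw
  obtain ⟨z, hz, hzeq⟩ := hw
  have hX0 : mk S X = mk S (0 : C) := by
    rw [← hzero, ← hφof X, ← hzeq, map_add, hA w, hker z hz, add_zero]
  have hrel : rel S X 0 := Quotient.exact hX0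
  obtain ⟨a, b, ha, hb, ⟨e⟩⟩ := hrel
  have hXa : S (X ⊞ a) := P_of_iso S e.symm (P_biprod S S.prop_zero hb)
  exact S.ext_of_isTriangulatedClosed₁ _ (binaryBiproductTriangle_distinguished X a) hXa ha
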